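/- Let A be an invertible n×n real matrix, let e_k ∈ ℝⁿ be the k-th standard basis vector, let m ∈ ℝⁿ, and let τ ≥ 0. If the least-squares residual satisfies ‖e_k − A m‖₂ ≤ τ, then ‖ |e_k| + |A| |m| ‖₂ ≤ 1 + ‖ |A| |A⁻¹| ‖₂ (1 + τ), where |·| applied to a vector or matrix denotes the entrywise absolute value, ‖·‖₂ on vectors denotes the Euclidean norm, and ‖·‖₂ on matrices denotes the induced operator 2-norm. -/

import Mathlib

open Matrix

/-- The Euclidean (2-)norm of a vector in `ℝⁿ`. -/
noncomputable def euclNorm {n : ℕ} (v : Fin n → ℝ) : ℝ :=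
  Real.sqrt (∑ i, v i ^ 2)

/-- The operator 2-norm of a square real matrix, i.e. the norm of the induced
operator on Euclidean space. -/
noncomputable def opNorm2 {n : ℕ} (M : Matrix (Fin n) (Fin n) ℝ) : ℝ :=
  ‖Matrix.toEuclideanCLM (𝕜 := ℝ) M‖


lemma euclNorm_eq_norm {n : ℕ} (v : Fin n → ℝ) :
    euclNorm v = ‖(WithLp.equiv 2 (Fin n → ℝ)).symm v‖ := by
  rw [EuclideanSpace.norm_eq, euclNorm]
  congr 1
  refine Finset.sum_congr rfl fun i _ => ?_
  rw [Real.norm_eq_abs, sq_abs]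
  rfl

lemma euclNorm_mono {n : ℕ} {u v : Fin n → ℝ} (h0 : ∀ i, 0 ≤ u i) (h : ∀ i, u i ≤ v i) :
    euclNorm u ≤ euclNorm v := by
  apply Real.sqrt_le_sqrt
  exact Finset.sum_le_sum fun i _ => pow_le_pow_left₀ (h0 i) (h i) 2

lemma euclNorm_mulVec_le {n : ℕ} (M : Matrix (Fin n) (Fin n) ℝ) (v : Fin n → ℝ) :
    euclNorm (M *ᵥ v) ≤ opNorm2 M * euclNorm v := by
  rw [euclNorm_eq_norm, euclNorm_eq_norm]
  have := (Matrix.toEuclideanCLM (𝕜 := ℝ) M).le_opNorm ((WithLp.equiv 2 (Fin n → ℝ)).symm v)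
  exact this

/-- **A priori bound for the residual-evaluation quantity in sparse approximate
inverse construction.**

Let `A ∈ ℝ^{n×n}` be invertible, `e_k` the `k`-th standard basis vector, `m ∈ ℝⁿ`,
and `τ ≥ 0`.  If `‖e_k − A m‖₂ ≤ τ`, then
`‖ |e_k| + |A| |m| ‖₂ ≤ 1 + ‖ |A| |A⁻¹| ‖₂ (1 + τ)`,
where `|·|` is the entrywise absolute value and the matrix norm is the operator
2-norm. -/
theorem spai_apriori_bound
    {n : ℕ} (A : Matrix (Fin n) (Fin n) ℝ) (hA : IsUnit A)
    (k : Fin n) (m : Fin n → ℝ) (τ : ℝ) (hτ : 0 ≤ τ)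
    (hres : euclNorm (Pi.single k 1 - A *ᵥ m) ≤ τ) :
    euclNorm (fun i => |(Pi.single k 1 : Fin n → ℝ) i| + (A.map (|·|) *ᵥ fun j => |m j|) i) ≤
      1 + opNorm2 (A.map (|·|) * A⁻¹.map (|·|)) * (1 + τ) := by
  set s : Fin n → ℝ := Pi.single k 1 with hs
  set r : Fin n → ℝ := s - A *ᵥ m with hr
  set w : Fin n → ℝ := fun i => |s i| + |r i| with hw
  -- m = A⁻¹ *ᵥ (s - r)
  have hm : m = A⁻¹ *ᵥ (s - r) := by
    have : s - r = A *ᵥ m := by simp [hr]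
    rw [this, Matrix.mulVec_mulVec, Matrix.nonsing_inv_mul A ((Matrix.isUnit_iff_isUnit_det A).mp hA),
      Matrix.one_mulVec]
  -- entrywise bound |m i| ≤ (A⁻¹.map abs *ᵥ w) i
  have hmw : ∀ i, |m i| ≤ (A⁻¹.map (|·|) *ᵥ w) i := by
    intro i
    rw [hm]
    simp only [Matrix.mulVec, dotProduct, Matrix.map_apply]
    calc |∑ j, A⁻¹ i j * (s - r) j| ≤ ∑ j, |A⁻¹ i j * (s - r) j| := Finset.abs_sum_le_sum_abs _ _
      _ ≤ ∑ j, |A⁻¹ i j| * w j := by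
          refine Finset.sum_le_sum fun j _ => ?_
          rw [abs_mul]
          refine mul_le_mul_of_nonneg_left ?_ (abs_nonneg _)
          simp only [Pi.sub_apply, hw]
          exact (abs_sub _ _).trans (le_refl _)
  -- hence entrywise (|A| |m|)_i ≤ ((|A||A⁻¹|) w)_i
  have key : ∀ i, (A.map (|·|) *ᵥ fun j => |m j|) i ≤ ((A.map (|·|) * A⁻¹.map (|·|)) *ᵥ w) i := by
    intro i
    rw [← Matrix.mulVec_mulVec]
    simp only [Matrix.mulVec, dotProduct, Matrix.map_apply]
    exact Finset.sum_le_sum fun j _ => mul_le_mul_of_nonneg_left (hmw j) (abs_nonneg _)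
  -- norm of w
  have hwnorm : euclNorm w ≤ 1 + τ := by
    have h1 : euclNorm w ≤ euclNorm s + euclNorm r := by
      rw [euclNorm_eq_norm w, euclNorm_eq_norm s, euclNorm_eq_norm r]
      have : ‖(WithLp.equiv 2 (Fin n → ℝ)).symm w‖
          = ‖(WithLp.equiv 2 (Fin n → ℝ)).symm (fun i => |s i|) +
              (WithLp.equiv 2 (Fin n → ℝ)).symm (fun i => |r i|)‖ := by
        congr 1
      rw [this]
      refine (norm_add_le _ _).trans ?_
      gcongr
      · rw [← euclNorm_eq_norm, ← euclNorm_eq_norm]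
        apply le_of_eq
        unfold euclNorm
        congr 1
        exact Finset.sum_congr rfl fun i _ => by rw [sq_abs]
      · rw [← euclNorm_eq_norm, ← euclNorm_eq_norm]
        apply le_of_eq
        unfold euclNorm
        congr 1
        exact Finset.sum_congr rfl fun i _ => by rw [sq_abs]
    have hsnorm : euclNorm s = 1 := by
      unfold euclNorm
      rw [show (∑ i, s i ^ 2) = 1 by
        rw [hs]
        rw [Finset.sum_eq_single k]
        · simp
        · intro b _ hb; simp [Pi.single_apply, hb]
        · simp]
      exact Real.sqrt_one
    linarith [hres, h1, hsnorm]
  -- combine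
  have h0 : ∀ i, (0:ℝ) ≤ |s i| + (A.map (|·|) *ᵥ fun j => |m j|) i := by
    intro i
    have : 0 ≤ (A.map (|·|) *ᵥ fun j => |m j|) i := by
      simp only [Matrix.mulVec, dotProduct, Matrix.map_apply]
      exact Finset.sum_nonneg fun j _ => mul_nonneg (abs_nonneg _) (abs_nonneg _)
    positivity
  calc euclNorm (fun i => |s i| + (A.map (|·|) *ᵥ fun j => |m j|) i)
      ≤ euclNorm (fun i => |s i| + ((A.map (|·|) * A⁻¹.map (|·|)) *ᵥ w) i) := by
        apply euclNorm_mono h0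
        intro i; exact add_le_add_right (key i) _
    _ ≤ euclNorm (fun i => |s i|) + euclNorm ((A.map (|·|) * A⁻¹.map (|·|)) *ᵥ w) := by
        rw [euclNorm_eq_norm, euclNorm_eq_norm, euclNorm_eq_norm]
        refine le_trans (le_of_eq ?_) (norm_add_le _ _)
        congr 1
    _ ≤ 1 + opNorm2 (A.map (|·|) * A⁻¹.map (|·|)) * (1 + τ) := by
        have h1 : euclNorm (fun i => |s i|) = 1 := by
          unfold euclNorm
          rw [show (∑ i, |s i| ^ 2) = 1 by
            rw [hs, Finset.sum_eq_single k]
            · simp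
            · intro b _ hb; simp [Pi.single_apply, hb]
            · simp]
          exact Real.sqrt_one
        have h2 := euclNorm_mulVec_le (A.map (|·|) * A⁻¹.map (|·|)) w
        have h3 : opNorm2 (A.map (|·|) * A⁻¹.map (|·|)) * euclNorm w ≤
            opNorm2 (A.map (|·|) * A⁻¹.map (|·|)) * (1 + τ) :=
          mul_le_mul_of_nonneg_left hwnorm (norm_nonneg _)
        linarith
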